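/- Let H ∈ (0,1), K ∈ (0,1) with 2HK = 1. Then (i) (1/n²)·Σ_{1 ≤ i < j ≤ n} h(j)² → 0 as n → ∞, and (ii) (1/n²)·( Σ_{i=1}^{n} (h(i) + 2^{1−K}) )² → (2^{1−K})² = 2^{2−2K} as n → ∞. -/

import Mathlib

open Filter Real

/-- Shift a sum over `Icc 1 n` to a sum over `range n`. -/
lemma bifBm_sum_shift (f : ℕ → ℝ) (n : ℕ) :
    ∑ i ∈ Finset.Icc 1 n, f i = ∑ i ∈ Finset.range n, f (1 + i) := by
  rw [← Finset.Ico_add_one_right_eq_Icc, Finset.sum_Ico_eq_sum_range]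
  simp

/-- The key analytic fact: `h(n) → 0` as `n → ∞` when `2HK = 1`. -/
lemma bifBm_h_tendsto_zero (H K : ℝ) (hK : K ∈ Set.Ioo (0:ℝ) 1)
    (hHK : 2*H*K = 1) :
    Tendsto (fun n : ℕ => (n : ℝ) ^ (2*H*K) + ((n : ℝ) - 1) ^ (2*H*K)
      - (2 / 2 ^ K) * ((n : ℝ) ^ (2*H) + ((n : ℝ) - 1) ^ (2*H)) ^ K)
      atTop (nhds 0) := by
  obtain ⟨hK0, hK1⟩ := hK
  have hKne : K ≠ 0 := ne_of_gt hK0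
  have h2Kp : (0:ℝ) < 2 ^ K := Real.rpow_pos_of_pos two_pos K
  have h2H : 2*H = 1/K := by
    field_simp
    nlinarith [hHK]
  set p : ℝ := 1/K with hp
  set c : ℝ := 2 / 2^K with hc
  set φ : ℝ → ℝ := fun t => 2 - t - c * (1 + (1-t)^p)^K with hφ
  have φ0 : φ 0 = 0 := by
    simp only [hφ, sub_zero, Real.one_rpow]
    rw [hc]
    have h12 : (1:ℝ) + 1 = 2 := by norm_num
    rw [h12]
    field_simp
    norm_num
  -- derivative of φ at 0 is 0
  have d1 : HasDerivAt (fun t : ℝ => 1 - t) (-1) 0 := by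
    simpa using (hasDerivAt_id (0:ℝ)).const_sub 1
  have d2 : HasDerivAt (fun t : ℝ => (1-t)^p) (-p) 0 := by
    have := d1.rpow_const (p := p) (by norm_num)
    simpa using this
  have d3 : HasDerivAt (fun t : ℝ => 1 + (1-t)^p) (-p) 0 := d2.const_add 1
  have d4 : HasDerivAt (fun t : ℝ => (1 + (1-t)^p)^K) (K * 2^(K-1) * (-p)) 0 := by
    have h2 : ((1:ℝ) + (1-(0:ℝ))^p) = 2 := by
      norm_num [Real.one_rpow]
    have := d3.rpow_const (p := K) (by rw [h2]; exact Or.inl two_ne_zero)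
    rw [h2] at this
    convert this using 1
    ring
  have dφ : HasDerivAt φ 0 0 := by
    have hd := ((hasDerivAt_id (0:ℝ)).const_sub 2).sub (d4.const_mul c)
    have hval : (-1 : ℝ) - c * (K * 2^(K-1) * (-p)) = 0 := by
      have h21 : (2:ℝ)^(K-1) = 2^K / 2 := by
        rw [Real.rpow_sub two_pos, Real.rpow_one]
      rw [hc, h21, hp]
      field_simp
      ring
    have hφ' : HasDerivAt φ (-1 - c * (K * 2^(K-1) * (-p))) 0 := by
      have : φ = fun x : ℝ => 2 - id x - c * (1 + (1-x)^p)^K := by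
        funext x; simp [hφ]
      rw [this]
      exact hd
    rwa [hval] at hφ'
  have hslope : Tendsto (fun t : ℝ => φ t / t) (nhdsWithin 0 {(0:ℝ)}ᶜ) (nhds 0) := by
    have h := hasDerivAt_iff_tendsto_slope.mp dφ
    refine h.congr (fun t => ?_)
    simp [slope_def_field, φ0]
  have h1n : Tendsto (fun n : ℕ => 1/(n:ℝ)) atTop (nhdsWithin 0 {(0:ℝ)}ᶜ) := by
    rw [tendsto_nhdsWithin_iff]
    refine ⟨tendsto_one_div_atTop_nhds_zero_nat, ?_⟩
    filter_upwards [eventually_ge_atTop 1] with n hn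
    have hn0 : (0:ℝ) < n := by exact_mod_cast hn
    have : (0:ℝ) < 1/(n:ℝ) := by positivity
    exact fun h => absurd h (ne_of_gt this)
  have hcomp : Tendsto (fun n : ℕ => φ (1/(n:ℝ)) / (1/(n:ℝ))) atTop (nhds 0) :=
    hslope.comp h1n
  refine hcomp.congr' ?_
  filter_upwards [eventually_ge_atTop 1] with n hn
  have hx1 : (1:ℝ) ≤ (n:ℝ) := by exact_mod_cast hn
  have hx0 : (0:ℝ) < (n:ℝ) := lt_of_lt_of_le one_pos hx1
  have hxne : (n:ℝ) ≠ 0 := ne_of_gt hx0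
  have key : φ (1/(n:ℝ)) / (1/(n:ℝ)) = (n:ℝ) * φ (1/(n:ℝ)) := by
    rw [div_div_eq_mul_div, div_one, mul_comm]
  rw [key]
  -- compute n * φ(1/n) = h(n)
  have e1 : (0:ℝ) ≤ 1 - 1/(n:ℝ) := by
    have : 1/(n:ℝ) ≤ 1 := by
      rw [div_le_one hx0]; exact hx1
    linarith
  have e2 : (n:ℝ)^p * ((1:ℝ) - 1/(n:ℝ))^p = ((n:ℝ)-1)^p := by
    rw [← Real.mul_rpow hx0.le e1]
    congr 1
    field_simp
  have hxpow : ((n:ℝ)^p)^K = (n:ℝ) := by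
    rw [← Real.rpow_mul hx0.le]
    have hpK : p * K = 1 := by rw [hp]; field_simp
    rw [hpK, Real.rpow_one]
  have hmain : (n:ℝ) * (1 + ((1:ℝ) - 1/(n:ℝ))^p)^K
      = ((n:ℝ)^p + ((n:ℝ)-1)^p)^K := by
    calc (n:ℝ) * (1 + ((1:ℝ) - 1/(n:ℝ))^p)^K
        = ((n:ℝ)^p)^K * (1 + ((1:ℝ) - 1/(n:ℝ))^p)^K := by rw [hxpow]
      _ = ((n:ℝ)^p * (1 + ((1:ℝ) - 1/(n:ℝ))^p))^K := by
          rw [← Real.mul_rpow (Real.rpow_nonneg hx0.le p) (by positivity)]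
      _ = ((n:ℝ)^p + ((n:ℝ)-1)^p)^K := by rw [mul_add, mul_one, e2]
  have h1 : (n:ℝ) * (1/(n:ℝ)) = 1 := by field_simp
  rw [hφ]
  simp only [hHK, Real.rpow_one]
  simp only [h2H, ← hp]
  rw [← hmain, mul_sub, mul_sub, h1]
  ring

set_option maxHeartbeats 1000000 in
/-- For `H ∈ (0,1)`, `K ∈ (0,1)` with `2HK = 1`, where
`h(y) = y^{2HK} + (y-1)^{2HK} - (2/2^K)(y^{2H} + (y-1)^{2H})^K`:
(i) `(1/n²) ∑_{1 ≤ i < j ≤ n} h(j)² → 0` and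
(ii) `(1/n²) (∑_{i=1}^n (h(i) + 2^{1-K}))² → (2^{1-K})²` as `n → ∞`. -/
theorem bifBm_quadratic_variation_sums
    (H K : ℝ) (hH : H ∈ Set.Ioo (0:ℝ) 1) (hK : K ∈ Set.Ioo (0:ℝ) 1)
    (hHK : 2*H*K = 1) :
    Tendsto (fun n : ℕ => (1 / (n : ℝ)^2) *
        ∑ j ∈ Finset.Icc 1 n, ∑ i ∈ Finset.Ico 1 j,
          ((j : ℝ) ^ (2*H*K) + ((j : ℝ) - 1) ^ (2*H*K)
            - (2 / 2 ^ K) * ((j : ℝ) ^ (2*H) + ((j : ℝ) - 1) ^ (2*H)) ^ K)^2)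
      atTop (nhds 0)
    ∧
    Tendsto (fun n : ℕ => (1 / (n : ℝ)^2) *
        (∑ i ∈ Finset.Icc 1 n,
          (((i : ℝ) ^ (2*H*K) + ((i : ℝ) - 1) ^ (2*H*K)
            - (2 / 2 ^ K) * ((i : ℝ) ^ (2*H) + ((i : ℝ) - 1) ^ (2*H)) ^ K) + 2 ^ (1 - K)))^2)
      atTop (nhds ((2 ^ ((1:ℝ) - K))^2)) := by
  set F : ℕ → ℝ := fun j => (j : ℝ) ^ (2*H*K) + ((j : ℝ) - 1) ^ (2*H*K)
      - (2 / 2 ^ K) * ((j : ℝ) ^ (2*H) + ((j : ℝ) - 1) ^ (2*H)) ^ K with hF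
  have hF0 : Tendsto F atTop (nhds 0) := bifBm_h_tendsto_zero H K hK hHK
  have hFj : ∀ j : ℕ, (j : ℝ) ^ (2*H*K) + ((j : ℝ) - 1) ^ (2*H*K)
      - (2 / 2 ^ K) * ((j : ℝ) ^ (2*H) + ((j : ℝ) - 1) ^ (2*H)) ^ K = F j :=
    fun j => by rw [hF]
  simp only [hFj]
  have hshift : Tendsto (fun i : ℕ => 1 + i) atTop atTop := by
    have := Filter.tendsto_add_atTop_nat 1
    refine this.congr (fun n => ?_)
    omega
  constructor
  · -- part (i)
    have hFsq : Tendsto (fun n : ℕ => F n ^ 2) atTop (nhds 0) := by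
      simpa using hF0.pow 2
    have hces : Tendsto (fun n : ℕ => ((n:ℝ))⁻¹ * ∑ i ∈ Finset.range n, F (1+i) ^ 2)
        atTop (nhds 0) := (hFsq.comp hshift).cesaro
    have hg : Tendsto (fun n : ℕ => (1/(n:ℝ)) * ∑ j ∈ Finset.Icc 1 n, F j ^ 2)
        atTop (nhds 0) := by
      refine hces.congr (fun n => ?_)
      rw [bifBm_sum_shift (fun j => F j ^ 2) n, one_div]
    refine squeeze_zero (fun n => ?_) (fun n => ?_) hg
    · apply mul_nonneg (by positivity)
      exact Finset.sum_nonneg fun j _ => Finset.sum_nonneg fun i _ => sq_nonneg _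
    · have hrw : ∀ j : ℕ, ∑ i ∈ Finset.Ico 1 j, (F j) ^ 2 = ((j - 1 : ℕ) : ℝ) * F j ^ 2 := by
        intro j
        rw [Finset.sum_const, Nat.card_Ico, nsmul_eq_mul]
      calc (1 / (n : ℝ)^2) * ∑ j ∈ Finset.Icc 1 n, ∑ i ∈ Finset.Ico 1 j, (F j)^2
          = (1 / (n : ℝ)^2) * ∑ j ∈ Finset.Icc 1 n, ((j - 1 : ℕ) : ℝ) * F j ^ 2 := by
            simp only [hrw]
        _ ≤ (1 / (n : ℝ)^2) * ∑ j ∈ Finset.Icc 1 n, (n : ℝ) * F j ^ 2 := by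
            apply mul_le_mul_of_nonneg_left _ (by positivity)
            refine Finset.sum_le_sum fun j hj => ?_
            apply mul_le_mul_of_nonneg_right _ (sq_nonneg _)
            have hjn : j - 1 ≤ n := le_trans (Nat.sub_le j 1) (Finset.mem_Icc.mp hj).2
            exact_mod_cast hjn
        _ = (1/(n:ℝ)) * ∑ j ∈ Finset.Icc 1 n, F j ^ 2 := by
            rw [← Finset.mul_sum]
            rcases Nat.eq_zero_or_pos n with h0 | h0
            · simp [h0]
            · have hne : (n:ℝ) ≠ 0 := Nat.cast_ne_zero.mpr (Nat.pos_iff_ne_zero.mp h0)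
              field_simp
  · -- part (ii)
    set c : ℝ := 2 ^ ((1:ℝ) - K) with hc
    have hFc : Tendsto (fun n : ℕ => F n + c) atTop (nhds c) := by
      simpa using hF0.add_const c
    have hces : Tendsto (fun n : ℕ => ((n:ℝ))⁻¹ * ∑ i ∈ Finset.range n, (F (1+i) + c))
        atTop (nhds c) := (hFc.comp hshift).cesaro
    have hmean : Tendsto (fun n : ℕ => (1/(n:ℝ)) * ∑ i ∈ Finset.Icc 1 n, (F i + c))
        atTop (nhds c) := by
      refine hces.congr (fun n => ?_)
      rw [bifBm_sum_shift (fun j => F j + c) n, one_div]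
    have := hmean.pow 2
    refine this.congr (fun n => ?_)
    rw [mul_pow, div_pow, one_pow]
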